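/- In the task set of Example 1, the minimal number of linear policies of the form π(s) = A·s (A ∈ ℝ) needed so that every one of the four target functions f₁(s) = −s²+2s, f₂(s) = s², f₃(s) = −0.01s²+0.02s, f₄(s) = 0.01s² is approximated with expected uniform absolute error ≤ 1/4 on [0,1] is at least 2: no single linear function π(s) = A·s satisfies both ∫₀¹|A s − f₁(s)| ds ≤ 1/4 and ∫₀¹|A s − f₄(s)| ds ≤ 1/4. -/
import Mathlib

open intervalIntegral MeasureTheory

lemma integ1 (A : ℝ) : (∫ s in (0:ℝ)..1, (A*s - (-s^2 + 2*s))) = A/2 - 2/3 := by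
  have : ∀ s : ℝ, A*s - (-s^2 + 2*s) = s^2 + (A-2)*s := by intro s; ring
  simp only [this]
  rw [intervalIntegral.integral_add (by apply Continuous.intervalIntegrable; continuity)
    (by apply Continuous.intervalIntegrable; continuity),
    intervalIntegral.integral_const_mul, integral_pow]
  simp
  ring

lemma integ2 (A : ℝ) : (∫ s in (0:ℝ)..1, (A*s - 0.01*s^2)) = A/2 - 1/300 := by
  have : ∀ s : ℝ, A*s - 0.01*s^2 = (-0.01)*s^2 + A*s := by intro s; ring
  simp only [this]
  rw [intervalIntegral.integral_add (by apply Continuous.intervalIntegrable; continuity)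
    (by apply Continuous.intervalIntegrable; continuity),
    intervalIntegral.integral_const_mul, intervalIntegral.integral_const_mul, integral_pow]
  norm_num
  ring

example (A : ℝ) : |∫ s in (0:ℝ)..1, (A*s - 0.01*s^2)| ≤ ∫ s in (0:ℝ)..1, |A*s - 0.01*s^2| := by
  exact intervalIntegral.abs_integral_le_integral_abs zero_le_one

theorem no_single_linear_policy :
    ∀ A : ℝ,
      ¬((∫ s in (0:ℝ)..1, |A*s - (-s^2 + 2*s)|) ≤ 1/4 ∧
        (∫ s in (0:ℝ)..1, |A*s - 0.01*s^2|) ≤ 1/4) := by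
  intro A ⟨h1, h2⟩
  have b1 : |A/2 - 2/3| ≤ 1/4 := by
    calc |A/2 - 2/3| = |∫ s in (0:ℝ)..1, (A*s - (-s^2 + 2*s))| := by rw [integ1]
    _ ≤ ∫ s in (0:ℝ)..1, |A*s - (-s^2 + 2*s)| :=
        intervalIntegral.abs_integral_le_integral_abs zero_le_one
    _ ≤ 1/4 := h1
  have b2 : |A/2 - 1/300| ≤ 1/4 := by
    calc |A/2 - 1/300| = |∫ s in (0:ℝ)..1, (A*s - 0.01*s^2)| := by rw [integ2]
    _ ≤ ∫ s in (0:ℝ)..1, |A*s - 0.01*s^2| :=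
        intervalIntegral.abs_integral_le_integral_abs zero_le_one
    _ ≤ 1/4 := h2
  rw [abs_le] at b1 b2
  linarith [b1.1, b1.2, b2.1, b2.2]
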